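/- Let 0 < ε < 1 and let c : ℤ×ℤ → ℝ be a function with c(m,n) ≥ 0 for all (m,n) and c(m,n) = 0 whenever |m+nτ′| > τ. Let k be a real number of the form k = (q−pτ′)/√5 with p, q ∈ ℤ and |(pτ−q)/√5| ≤ ε/(2πτ). Suppose I ∈ ℝ and J ∈ ℂ are such that, as N → ∞ along the positive integers, (1/(2N))·Σ_{(m,n)∈ℤ²: |m+nτ| ≤ N, |m+nτ′| ≤ τ} c(m,n) → I and (1/(2N))·Σ_{(m,n)∈ℤ²: |m+nτ| ≤ N, |m+nτ′| ≤ τ} exp(−2πi(m+nτ)k)·c(m,n) → J. Then Re J ≥ (1−ε)·I. -/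

import Mathlib

noncomputable def tau : ℝ := (1 + Real.sqrt 5) / 2
noncomputable def tau' : ℝ := (1 - Real.sqrt 5) / 2

lemma sqrt5_sq : Real.sqrt 5 ^ 2 = 5 := Real.sq_sqrt (by norm_num)
lemma sqrt5_gt_two : 2 < Real.sqrt 5 := by
  nlinarith [sqrt5_sq, Real.sqrt_nonneg 5]
lemma sqrt5_lt_three : Real.sqrt 5 < 3 := by
  nlinarith [sqrt5_sq, Real.sqrt_nonneg 5]
lemma tau_pos : 0 < tau := by unfold tau; nlinarith [sqrt5_gt_two]
lemma tau_lt_two : tau < 2 := by unfold tau; nlinarith [sqrt5_lt_three]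

lemma key_identity (p q m n : ℤ) :
    ((m : ℝ) + n * tau) * (((q : ℝ) - p * tau') / Real.sqrt 5)
      = ((m * p + n * q : ℤ) : ℝ)
        - ((m : ℝ) + n * tau') * (((p : ℝ) * tau - q) / Real.sqrt 5) := by
  have hne : Real.sqrt 5 ≠ 0 := by nlinarith [sqrt5_gt_two]
  unfold tau tau'
  field_simp
  ring_nf
  push_cast
  ring

lemma fin_idx (N : ℕ) : Finite {r : ℤ × ℤ //
    |(r.1 : ℝ) + r.2 * tau| ≤ N ∧ |(r.1 : ℝ) + r.2 * tau'| ≤ tau} := by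
  have hsub : {r : ℤ × ℤ |
      |(r.1 : ℝ) + r.2 * tau| ≤ N ∧ |(r.1 : ℝ) + r.2 * tau'| ≤ tau}
      ⊆ Set.Icc (-(3 * (N : ℤ) + 4), -((N : ℤ) + 2)) (3 * N + 4, N + 2) := by
    rintro ⟨m, n⟩ ⟨h1, h2⟩
    simp only at h1 h2
    have htau2 : tau < 2 := tau_lt_two
    have h2' : |(m : ℝ) + n * tau'| ≤ 2 := h2.trans htau2.le
    have hdiff : ((m : ℝ) + n * tau) - ((m : ℝ) + n * tau') = n * Real.sqrt 5 := by
      unfold tau tau'; ring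
    have hn : |(n : ℝ)| ≤ (N : ℝ) + 2 := by
      have : |(n : ℝ) * Real.sqrt 5| ≤ (N : ℝ) + 2 := by
        rw [← hdiff]
        calc |((m : ℝ) + n * tau) - ((m : ℝ) + n * tau')|
            ≤ |(m : ℝ) + n * tau| + |(m : ℝ) + n * tau'| := abs_sub _ _
          _ ≤ (N : ℝ) + 2 := by linarith
      rw [abs_mul, abs_of_nonneg (Real.sqrt_nonneg 5)] at this
      nlinarith [sqrt5_gt_two, abs_nonneg (n : ℝ)]
    have hm : |(m : ℝ)| ≤ 3 * N + 4 := by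
      have : |(m : ℝ)| ≤ |(m : ℝ) + n * tau| + |(n : ℝ) * tau| := by
        have := abs_sub ((m : ℝ) + n * tau) ((n : ℝ) * tau)
        simpa using this
      rw [abs_mul, abs_of_nonneg tau_pos.le] at this
      nlinarith [abs_nonneg (n : ℝ), tau_pos]
    have hnZ : |n| ≤ (N : ℤ) + 2 := by
      exact_mod_cast (by push_cast; exact hn : |(n : ℝ)| ≤ (((N : ℤ) + 2 : ℤ) : ℝ))
    have hmZ : |m| ≤ 3 * (N : ℤ) + 4 := by
      exact_mod_cast (by push_cast; exact hm : |(m : ℝ)| ≤ ((3 * (N : ℤ) + 4 : ℤ) : ℝ))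
    rw [abs_le] at hnZ hmZ
    exact ⟨⟨hmZ.1, hnZ.1⟩, ⟨hmZ.2, hnZ.2⟩⟩
  exact ((Set.finite_Icc _ _).subset hsub).to_subtype

lemma term_bound (ε : ℝ) (hε0 : 0 < ε) (hε1 : ε < 1)
    (c : ℤ × ℤ → ℝ) (hc0 : ∀ r, 0 ≤ c r)
    (p q : ℤ) (k : ℝ)
    (hk : k = ((q : ℝ) - p * tau') / Real.sqrt 5)
    (hpq : |((p : ℝ) * tau - q) / Real.sqrt 5| ≤ ε / (2 * Real.pi * tau))
    (r : ℤ × ℤ) (hr2 : |(r.1 : ℝ) + r.2 * tau'| ≤ tau) :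
    (1 - ε) * c r ≤ (Complex.exp (-2 * Real.pi * Complex.I *
            ((((r.1 : ℝ) + r.2 * tau) * k : ℝ) : ℂ)) * (c r : ℂ)).re := by
  obtain ⟨m, n⟩ := r
  set x : ℝ := ((m : ℝ) + n * tau) * k with hx
  have harg : (-2 * (Real.pi : ℂ) * Complex.I * ((x : ℝ) : ℂ))
      = (((-2 * Real.pi * x : ℝ)) : ℂ) * Complex.I := by push_cast; ring
  have hre : (Complex.exp (-2 * Real.pi * Complex.I * ((x : ℝ) : ℂ)) * ((c (m, n) : ℝ) : ℂ)).re
      = Real.cos (-2 * Real.pi * x) * c (m, n) := by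
    rw [harg, Complex.mul_re, Complex.ofReal_re, Complex.ofReal_im, mul_zero, sub_zero,
      Complex.exp_ofReal_mul_I_re]
  rw [hre]
  set δ : ℝ := ((p : ℝ) * tau - q) / Real.sqrt 5 with hδ
  have hxval : x = ((m * p + n * q : ℤ) : ℝ) - ((m : ℝ) + n * tau') * δ := by
    rw [hx, hk]; exact key_identity p q m n
  have hcos : Real.cos (-2 * Real.pi * x)
      = Real.cos (2 * Real.pi * (((m : ℝ) + n * tau') * δ)) := by
    rw [hxval]
    have : -2 * Real.pi * (((m * p + n * q : ℤ) : ℝ) - ((m : ℝ) + n * tau') * δ)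
        = 2 * Real.pi * (((m : ℝ) + n * tau') * δ) - (m * p + n * q : ℤ) * (2 * Real.pi) := by
      ring
    rw [this, Real.cos_sub_int_mul_two_pi]
  rw [hcos]
  set θ : ℝ := 2 * Real.pi * (((m : ℝ) + n * tau') * δ) with hθ
  have hθbound : |θ| ≤ ε := by
    have hδb : |δ| ≤ ε / (2 * Real.pi * tau) := hpq
    have hπ : 0 < Real.pi := Real.pi_pos
    have h1 : |θ| = 2 * Real.pi * (|(m : ℝ) + n * tau'| * |δ|) := by
      rw [hθ, abs_mul, abs_mul, abs_mul, abs_two, abs_of_nonneg Real.pi_pos.le]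
      try ring
    rw [h1]
    have h2 : |(m : ℝ) + n * tau'| * |δ| ≤ tau * (ε / (2 * Real.pi * tau)) :=
      mul_le_mul hr2 hδb (abs_nonneg _) tau_pos.le
    calc 2 * Real.pi * (|(m : ℝ) + n * tau'| * |δ|)
        ≤ 2 * Real.pi * (tau * (ε / (2 * Real.pi * tau))) := by nlinarith
      _ = ε := by
          have hτ : tau ≠ 0 := tau_pos.ne'
          have hπ' : Real.pi ≠ 0 := Real.pi_ne_zero
          field_simp
  have hcosge : 1 - ε ≤ Real.cos θ := by
    have := Real.one_sub_sq_div_two_le_cos (x := θ)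
    have hsq : θ ^ 2 ≤ ε ^ 2 := by
      have := abs_nonneg θ
      nlinarith [hθbound, sq_abs θ]
    nlinarith
  exact mul_le_mul_of_nonneg_right hcosge (hc0 (m, n))

/-- High-intensity Bragg peaks for subsets of the Fibonacci model set: if the
autocorrelation coefficients `c` are nonnegative and supported in `⋀([−τ,τ])`, the
averaged sums converge to `I` (at `0`) and `J` (at `k ∈ ⋀⋆([−ε/(2πτ), ε/(2πτ)])`),
then `Re J ≥ (1 − ε)·I`. -/
theorem bragg_peak_high_intensity_fibonacci (ε : ℝ) (hε0 : 0 < ε) (hε1 : ε < 1)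
    (c : ℤ × ℤ → ℝ)
    (hc0 : ∀ r, 0 ≤ c r)
    (hcsupp : ∀ r : ℤ × ℤ, tau < |(r.1 : ℝ) + r.2 * tau'| → c r = 0)
    (p q : ℤ) (k : ℝ)
    (hk : k = ((q : ℝ) - p * tau') / Real.sqrt 5)
    (hpq : |((p : ℝ) * tau - q) / Real.sqrt 5| ≤ ε / (2 * Real.pi * tau))
    (I₀ : ℝ) (J : ℂ)
    (hI : Filter.Tendsto
      (fun N : ℕ => (1 / (2 * (N : ℝ))) *
        ∑' r : {r : ℤ × ℤ //
            |(r.1 : ℝ) + r.2 * tau| ≤ N ∧ |(r.1 : ℝ) + r.2 * tau'| ≤ tau},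
          c r)
      Filter.atTop (nhds I₀))
    (hJ : Filter.Tendsto
      (fun N : ℕ => (1 / (2 * (N : ℝ)) : ℂ) *
        ∑' r : {r : ℤ × ℤ //
            |(r.1 : ℝ) + r.2 * tau| ≤ N ∧ |(r.1 : ℝ) + r.2 * tau'| ≤ tau},
          Complex.exp (-2 * Real.pi * Complex.I *
            ((((r.1.1 : ℝ) + r.1.2 * tau) * k : ℝ) : ℂ)) * (c r : ℂ))
      Filter.atTop (nhds J)) :
    (1 - ε) * I₀ ≤ J.re := by
  have hlim1 : Filter.Tendsto
      (fun N : ℕ => (1 - ε) * ((1 / (2 * (N : ℝ))) *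
        ∑' r : {r : ℤ × ℤ //
            |(r.1 : ℝ) + r.2 * tau| ≤ N ∧ |(r.1 : ℝ) + r.2 * tau'| ≤ tau}, c r))
      Filter.atTop (nhds ((1 - ε) * I₀)) := hI.const_mul _
  have hlim2 : Filter.Tendsto
      (fun N : ℕ => ((1 / (2 * (N : ℝ)) : ℂ) *
        ∑' r : {r : ℤ × ℤ //
            |(r.1 : ℝ) + r.2 * tau| ≤ N ∧ |(r.1 : ℝ) + r.2 * tau'| ≤ tau},
          Complex.exp (-2 * Real.pi * Complex.I *
            ((((r.1.1 : ℝ) + r.1.2 * tau) * k : ℝ) : ℂ)) * (c r : ℂ)).re)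
      Filter.atTop (nhds J.re) := (Complex.continuous_re.tendsto J).comp hJ
  refine le_of_tendsto_of_tendsto' hlim1 hlim2 fun N => ?_
  haveI := fin_idx N
  set S := {r : ℤ × ℤ //
      |(r.1 : ℝ) + r.2 * tau| ≤ N ∧ |(r.1 : ℝ) + r.2 * tau'| ≤ tau}
  have hf : Summable (fun r : S => Complex.exp (-2 * Real.pi * Complex.I *
      ((((r.1.1 : ℝ) + r.1.2 * tau) * k : ℝ) : ℂ)) * (c r : ℂ)) := .of_finite
  have hcoe : (1 / (2 * (N : ℝ)) : ℂ) = ((1 / (2 * (N : ℝ)) : ℝ) : ℂ) := by push_cast; ring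
  rw [hcoe, Complex.re_ofReal_mul, Complex.re_tsum hf]
  have hinner : (1 - ε) * ∑' r : S, c r
      ≤ ∑' r : S, (Complex.exp (-2 * Real.pi * Complex.I *
          ((((r.1.1 : ℝ) + r.1.2 * tau) * k : ℝ) : ℂ)) * (c r : ℂ)).re := by
    rw [← tsum_mul_left]
    exact Summable.tsum_le_tsum
      (fun r => term_bound ε hε0 hε1 c hc0 p q k hk hpq r.1 r.2.2)
      .of_finite .of_finite
  have hpos : (0 : ℝ) ≤ 1 / (2 * (N : ℝ)) := by positivity
  calc (1 - ε) * ((1 / (2 * (N : ℝ))) * ∑' r : S, c r)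
      = (1 / (2 * (N : ℝ))) * ((1 - ε) * ∑' r : S, c r) := by ring
    _ ≤ _ := mul_le_mul_of_nonneg_left hinner hpos
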